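/- Let N be a Young function, q > 2 and κ ∈ {0,1} with N(r·s) ≤ r^q·(N(s) + 2κ) for all r ≥ 2, s ≥ 0. Let (E,μ) be a σ-finite measure space with μ(E) < ∞ in case κ = 1, let T > 0, let (Ω,P) be a probability space, and let μ̄ := dt ⊗ μ ⊗ P be the product measure on [0,T] × E × Ω (dt = Lebesgue measure on [0,T]). Let f : [0,T] × E × Ω → ℝ be measurable with ‖f(t,·,ω)‖_{L_N(μ)} < ∞ for dt×P-a.e. (t,ω). Then ∫N(f) dμ̄ ≤ (1 + 2·μ(E)·κ) · ∫_Ω ∫_0^T (‖f(t,·,ω)‖_{L_N(μ)} + 2)^q dt P(dω), and consequently ‖f‖_{L_N(μ̄)} ≤ 1 + (1 + 2·μ(E)·κ) · ∫_Ω ∫_0^T (‖f(t,·,ω)‖_{L_N(μ)} + 2)^q dt P(dω). In particular L^q([0,T]×Ω → L_N(μ); dt×P) embeds continuously into L_N(μ̄). (Paper Lemma 3.7, continuity of the second embedding.) -/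

import Mathlib

open Filter MeasureTheory
open scoped ENNReal

/-- A Young function: continuous, convex, even, nonnegative, vanishing exactly at `0`,
with `N s / s → 0` as `s → 0⁺` and `N s / s → ∞` as `s → ∞`. -/
def IsYoungFunction (N : ℝ → ℝ) : Prop :=
  Continuous N ∧ ConvexOn ℝ Set.univ N ∧ (∀ s, N (-s) = N s) ∧
  (∀ s, 0 ≤ N s) ∧ (∀ s, N s = 0 ↔ s = 0) ∧
  Tendsto (fun s => N s / s) (nhdsWithin 0 (Set.Ioi 0)) (nhds 0) ∧
  Tendsto (fun s => N s / s) atTop atTop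

/-- The Luxemburg norm `inf { λ > 0 : ∫ N(f/λ) dμ ≤ 1 }`, with `inf ∅ = ∞`. -/
noncomputable def luxemburgNorm {X : Type*} [MeasurableSpace X] (N : ℝ → ℝ)
    (μ : Measure X) (f : X → ℝ) : ℝ≥0∞ :=
  ⨅ (lam : ℝ) (_ : 0 < lam) (_ : ∫⁻ x, ENNReal.ofReal (N (f x / lam)) ∂μ ≤ 1),
    ENNReal.ofReal lam

private lemma young_zero {N : ℝ → ℝ} (hN : IsYoungFunction N) : N 0 = 0 :=
  (hN.2.2.2.2.1 0).2 rfl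

private lemma young_abs {N : ℝ → ℝ} (hN : IsYoungFunction N) (x : ℝ) : N |x| = N x := by
  rcases abs_choice x with h | h
  · rw [h]
  · rw [h, hN.2.2.1]

private lemma young_mono {N : ℝ → ℝ} (hN : IsYoungFunction N) {a b : ℝ}
    (ha : 0 ≤ a) (hab : a ≤ b) : N a ≤ N b := by
  rcases eq_or_lt_of_le (ha.trans hab) with hb | hb
  · have : a = 0 := le_antisymm (hab.trans hb.symm.le) ha
    rw [this, ← hb]
  · have ht0 : 0 ≤ a / b := div_nonneg ha hb.le
    have ht1 : a / b ≤ 1 := (div_le_one hb).2 hab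
    have := hN.2.1.2 (Set.mem_univ b) (Set.mem_univ (0:ℝ)) ht0
      (show (0:ℝ) ≤ 1 - a / b by linarith) (show a / b + (1 - a / b) = 1 by ring)
    simp only [smul_eq_mul, mul_zero, add_zero] at this
    rw [div_mul_cancel₀ _ hb.ne'] at this
    calc N a ≤ a / b * N b + (1 - a / b) * N 0 := this
      _ = a / b * N b := by rw [young_zero hN]; ring
      _ ≤ 1 * N b := by
          exact mul_le_mul_of_nonneg_right ht1 (hN.2.2.2.1 b)
      _ = N b := one_mul _

private lemma young_div {N : ℝ → ℝ} (hN : IsYoungFunction N) {lam : ℝ} (hlam : 1 ≤ lam)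
    (x : ℝ) : N (x / lam) ≤ N x / lam := by
  have hl0 : 0 < lam := lt_of_lt_of_le one_pos hlam
  have ht0 : (0:ℝ) ≤ 1 / lam := by positivity
  have ht1 : 1 / lam ≤ 1 := by
    rw [div_le_one hl0]; exact hlam
  have := hN.2.1.2 (Set.mem_univ x) (Set.mem_univ (0:ℝ)) ht0
    (show (0:ℝ) ≤ 1 - 1 / lam by linarith) (show 1 / lam + (1 - 1 / lam) = 1 by ring)
  simp only [smul_eq_mul, mul_zero, add_zero] at this
  calc N (x / lam) = N (1 / lam * x) := by rw [one_div, inv_mul_eq_div]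
    _ ≤ 1 / lam * N x + (1 - 1 / lam) * N 0 := this
    _ = N x / lam := by rw [young_zero hN]; ring

/-- The core estimate for a single admissible `lam`. -/
private lemma young_bound {E : Type*} [MeasurableSpace E] (μ : Measure E) {N : ℝ → ℝ}
    (hN : IsYoungFunction N) {q κ : ℝ} (hq0 : 0 ≤ q) (hκ0 : 0 ≤ κ)
    (hΔ : ∀ r s : ℝ, 2 ≤ r → 0 ≤ s → N (r * s) ≤ r ^ q * (N s + 2 * κ))
    (g : E → ℝ) {lam : ℝ} (hlam : 0 < lam)
    (hcond : ∫⁻ e, ENNReal.ofReal (N (g e / lam)) ∂μ ≤ 1) :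
    ∫⁻ e, ENNReal.ofReal (N (g e)) ∂μ ≤
      (1 + 2 * μ Set.univ * ENNReal.ofReal κ) * (ENNReal.ofReal lam + 2) ^ q := by
  set r : ℝ := lam + 2 with hr
  have hr2 : (2:ℝ) ≤ r := by simp [hr]; linarith
  have hr0 : (0:ℝ) < r := by linarith
  have hrq0 : (0:ℝ) ≤ r ^ q := Real.rpow_nonneg hr0.le q
  have key : ∀ e, ENNReal.ofReal (N (g e)) ≤
      ENNReal.ofReal (r ^ q) * (ENNReal.ofReal (N (g e / lam)) + ENNReal.ofReal (2 * κ)) := by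
    intro e
    have h1 : N (g e) ≤ r ^ q * (N (g e / lam) + 2 * κ) := by
      have habs : N (g e) = N |g e| := (young_abs hN (g e)).symm
      have hmul : |g e| = r * (|g e| / r) := by field_simp
      have hΔ' := hΔ r (|g e| / r) hr2 (by positivity)
      have hmono : N (|g e| / r) ≤ N (g e / lam) := by
        have : |g e| / r ≤ |g e| / lam :=
          div_le_div_of_nonneg_left (abs_nonneg _) hlam (by linarith)
        calc N (|g e| / r) ≤ N (|g e| / lam) := young_mono hN (by positivity) this
          _ = N |g e / lam| := by rw [abs_div, abs_of_pos hlam]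
          _ = N (g e / lam) := young_abs hN _
      calc N (g e) = N (r * (|g e| / r)) := by rw [habs, ← hmul]
        _ ≤ r ^ q * (N (|g e| / r) + 2 * κ) := hΔ'
        _ ≤ r ^ q * (N (g e / lam) + 2 * κ) := by
            apply mul_le_mul_of_nonneg_left _ hrq0; linarith
    calc ENNReal.ofReal (N (g e)) ≤ ENNReal.ofReal (r ^ q * (N (g e / lam) + 2 * κ)) :=
          ENNReal.ofReal_le_ofReal h1
      _ = ENNReal.ofReal (r ^ q) * (ENNReal.ofReal (N (g e / lam)) + ENNReal.ofReal (2 * κ)) := by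
          rw [ENNReal.ofReal_mul hrq0,
            ENNReal.ofReal_add (hN.2.2.2.1 _) (by positivity)]
  calc ∫⁻ e, ENNReal.ofReal (N (g e)) ∂μ
      ≤ ∫⁻ e, ENNReal.ofReal (r ^ q) *
          (ENNReal.ofReal (N (g e / lam)) + ENNReal.ofReal (2 * κ)) ∂μ :=
        lintegral_mono key
    _ = ENNReal.ofReal (r ^ q) *
          ∫⁻ e, (ENNReal.ofReal (N (g e / lam)) + ENNReal.ofReal (2 * κ)) ∂μ :=
        lintegral_const_mul' _ _ ENNReal.ofReal_ne_top
    _ = ENNReal.ofReal (r ^ q) *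
          ((∫⁻ e, ENNReal.ofReal (N (g e / lam)) ∂μ) + ENNReal.ofReal (2 * κ) * μ Set.univ) := by
        rw [lintegral_add_right _ measurable_const, lintegral_const]
    _ ≤ ENNReal.ofReal (r ^ q) * (1 + ENNReal.ofReal (2 * κ) * μ Set.univ) := by
        exact mul_le_mul_right (add_le_add_left hcond _) _
    _ = (1 + 2 * μ Set.univ * ENNReal.ofReal κ) * (ENNReal.ofReal lam + 2) ^ q := by
        have h2 : (ENNReal.ofReal lam + 2 : ℝ≥0∞) = ENNReal.ofReal r := by
          rw [hr, ENNReal.ofReal_add hlam.le (by norm_num : (0:ℝ) ≤ 2)]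
          norm_num
        rw [h2, ← ENNReal.ofReal_rpow_of_pos hr0,
          ENNReal.ofReal_mul (by norm_num : (0:ℝ) ≤ 2)]
        norm_num
        ring

private lemma young_key {E : Type*} [MeasurableSpace E] (μ : Measure E) {N : ℝ → ℝ}
    (hN : IsYoungFunction N) {q κ : ℝ} (hq0 : 0 ≤ q) (hκ0 : 0 ≤ κ)
    (hΔ : ∀ r s : ℝ, 2 ≤ r → 0 ≤ s → N (r * s) ≤ r ^ q * (N s + 2 * κ))
    (hC : (1 + 2 * μ Set.univ * ENNReal.ofReal κ) ≠ ⊤)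
    (g : E → ℝ) (hl : luxemburgNorm N μ g < ⊤) :
    ∫⁻ e, ENNReal.ofReal (N (g e)) ∂μ ≤
      (1 + 2 * μ Set.univ * ENNReal.ofReal κ) * (luxemburgNorm N μ g + 2) ^ q := by
  set C := 1 + 2 * μ Set.univ * ENNReal.ofReal κ with hCdef
  set L := luxemburgNorm N μ g with hL
  have hsel : ∀ n : ℕ, ∃ lam : ℝ, 0 < lam ∧
      (∫⁻ x, ENNReal.ofReal (N (g x / lam)) ∂μ ≤ 1) ∧
      ENNReal.ofReal lam < L + ((n : ℝ≥0∞))⁻¹ := by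
    intro n
    have hlt : L < L + ((n : ℝ≥0∞))⁻¹ :=
      ENNReal.lt_add_right hl.ne (ENNReal.inv_ne_zero.2 (ENNReal.natCast_ne_top n))
    rw [hL, luxemburgNorm] at hlt
    simp only [iInf_lt_iff] at hlt
    obtain ⟨lam, h1, h2, h3⟩ := hlt
    exact ⟨lam, h1, h2, h3⟩
  have hbound : ∀ n : ℕ, ∫⁻ e, ENNReal.ofReal (N (g e)) ∂μ ≤
      C * (L + ((n : ℝ≥0∞))⁻¹ + 2) ^ q := by
    intro n
    obtain ⟨lam, h1, h2, h3⟩ := hsel n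
    calc ∫⁻ e, ENNReal.ofReal (N (g e)) ∂μ
        ≤ C * (ENNReal.ofReal lam + 2) ^ q := young_bound μ hN hq0 hκ0 hΔ g h1 h2
      _ ≤ C * (L + ((n : ℝ≥0∞))⁻¹ + 2) ^ q := by
          apply mul_le_mul_right
          exact ENNReal.rpow_le_rpow (add_le_add_left h3.le 2) hq0
  have htend : Tendsto (fun n : ℕ => C * (L + ((n : ℝ≥0∞))⁻¹ + 2) ^ q) atTop
      (nhds (C * (L + 2) ^ q)) := by
    have h1 : Tendsto (fun n : ℕ => L + ((n : ℝ≥0∞))⁻¹ + 2) atTop (nhds (L + 2)) := by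
      have := (ENNReal.tendsto_inv_nat_nhds_zero.const_add L).add_const (2 : ℝ≥0∞)
      simpa using this
    have h2 : Tendsto (fun n : ℕ => (L + ((n : ℝ≥0∞))⁻¹ + 2) ^ q) atTop
        (nhds ((L + 2) ^ q)) := (ENNReal.continuous_rpow_const.tendsto _).comp h1
    exact ENNReal.Tendsto.const_mul h2 (Or.inr hC)
  exact ge_of_tendsto' htend hbound |>.trans_eq' rfl

theorem stmt14 {E Ω : Type*} [MeasurableSpace E] [MeasurableSpace Ω]
    (μ : Measure E) [SigmaFinite μ] (P : Measure Ω) [IsProbabilityMeasure P]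
    (N : ℝ → ℝ) (hN : IsYoungFunction N) (q κ : ℝ) (hq : 2 < q) (hκ : κ = 0 ∨ κ = 1)
    (hΔ : ∀ r s : ℝ, 2 ≤ r → 0 ≤ s → N (r * s) ≤ r ^ q * (N s + 2 * κ))
    (hfin : κ = 1 → μ Set.univ < ⊤)
    (T : ℝ) (hT : 0 < T)
    (f : ℝ × E × Ω → ℝ) (hf : Measurable f)
    (hfib : ∀ᵐ p ∂((volume.restrict (Set.Icc (0:ℝ) T)).prod P),
      luxemburgNorm N μ (fun e => f (p.1, e, p.2)) < ⊤) :
    (∫⁻ x, ENNReal.ofReal (N (f x))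
        ∂((volume.restrict (Set.Icc (0:ℝ) T)).prod (μ.prod P))) ≤
      (1 + 2 * μ Set.univ * ENNReal.ofReal κ) *
        ∫⁻ p, (luxemburgNorm N μ (fun e => f (p.1, e, p.2)) + 2) ^ q
          ∂((volume.restrict (Set.Icc (0:ℝ) T)).prod P) ∧
    luxemburgNorm N ((volume.restrict (Set.Icc (0:ℝ) T)).prod (μ.prod P)) f ≤
      1 + (1 + 2 * μ Set.univ * ENNReal.ofReal κ) *
        ∫⁻ p, (luxemburgNorm N μ (fun e => f (p.1, e, p.2)) + 2) ^ q
          ∂((volume.restrict (Set.Icc (0:ℝ) T)).prod P) := by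
  set ν := volume.restrict (Set.Icc (0:ℝ) T) with hν
  set C := 1 + 2 * μ Set.univ * ENNReal.ofReal κ with hCdef
  have hq0 : (0:ℝ) ≤ q := by linarith
  have hκ0 : (0:ℝ) ≤ κ := by rcases hκ with h | h <;> simp [h]
  have hC : C ≠ ⊤ := by
    rcases hκ with h | h
    · simp [hCdef, h]
    · rw [hCdef]
      exact ENNReal.add_ne_top.2 ⟨ENNReal.one_ne_top,
        ENNReal.mul_ne_top (ENNReal.mul_ne_top (by norm_num) (hfin h).ne)
          ENNReal.ofReal_ne_top⟩
  set F : ℝ × E × Ω → ℝ≥0∞ := fun x => ENNReal.ofReal (N (f x)) with hFdef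
  have hF : Measurable F := ENNReal.measurable_ofReal.comp (hN.1.measurable.comp hf)
  -- Tonelli rearrangement
  have hh : Measurable fun p : ℝ × Ω => ∫⁻ e, F (p.1, e, p.2) ∂μ := by
    apply Measurable.lintegral_prod_right (f := fun (p : ℝ × Ω) (e : E) => F (p.1, e, p.2))
    exact hF.comp <| ((measurable_fst.comp measurable_fst).prodMk
      (measurable_snd.prodMk (measurable_snd.comp measurable_fst)))
  have tonelli : ∫⁻ x, F x ∂(ν.prod (μ.prod P)) =
      ∫⁻ p, ∫⁻ e, F (p.1, e, p.2) ∂μ ∂(ν.prod P) := by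
    rw [MeasureTheory.lintegral_prod _ hF.aemeasurable]
    rw [MeasureTheory.lintegral_prod _ hh.aemeasurable]
    congr 1
    ext t
    exact MeasureTheory.lintegral_prod_symm _
      ((hF.comp measurable_prodMk_left).aemeasurable)
  have part1 : ∫⁻ x, F x ∂(ν.prod (μ.prod P)) ≤
      C * ∫⁻ p, (luxemburgNorm N μ (fun e => f (p.1, e, p.2)) + 2) ^ q ∂(ν.prod P) := by
    rw [tonelli, ← lintegral_const_mul' _ _ hC]
    refine lintegral_mono_ae (hfib.mono fun p hp => ?_)
    exact young_key μ hN hq0 hκ0 hΔ hC (fun e => f (p.1, e, p.2)) hp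
  refine ⟨part1, ?_⟩
  set I := C * ∫⁻ p, (luxemburgNorm N μ (fun e => f (p.1, e, p.2)) + 2) ^ q ∂(ν.prod P)
    with hIdef
  by_cases hI : I = ⊤
  · rw [hI]; simp
  · have h1I : (1 + I) ≠ ⊤ := ENNReal.add_ne_top.2 ⟨ENNReal.one_ne_top, hI⟩
    set lam : ℝ := (1 + I).toReal with hlamdef
    have hlam1 : 1 ≤ lam := by
      rw [hlamdef, ENNReal.toReal_add ENNReal.one_ne_top hI]
      simp [ENNReal.toReal_nonneg]
    have hlam0 : (0:ℝ) < lam := lt_of_lt_of_le one_pos hlam1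
    have hofReal : ENNReal.ofReal lam = 1 + I := ENNReal.ofReal_toReal h1I
    have hcond : ∫⁻ x, ENNReal.ofReal (N (f x / lam)) ∂(ν.prod (μ.prod P)) ≤ 1 := by
      have hpt : ∀ x, ENNReal.ofReal (N (f x / lam)) ≤ F x * (ENNReal.ofReal lam)⁻¹ := by
        intro x
        calc ENNReal.ofReal (N (f x / lam)) ≤ ENNReal.ofReal (N (f x) / lam) :=
            ENNReal.ofReal_le_ofReal (young_div hN hlam1 _)
          _ = ENNReal.ofReal (N (f x)) / ENNReal.ofReal lam :=
            ENNReal.ofReal_div_of_pos hlam0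
          _ = F x * (ENNReal.ofReal lam)⁻¹ := by rw [div_eq_mul_inv]
      have hinvne : (ENNReal.ofReal lam)⁻¹ ≠ ⊤ :=
        ENNReal.inv_ne_top.2 (ENNReal.ofReal_pos.2 hlam0).ne'
      calc ∫⁻ x, ENNReal.ofReal (N (f x / lam)) ∂(ν.prod (μ.prod P))
          ≤ ∫⁻ x, F x * (ENNReal.ofReal lam)⁻¹ ∂(ν.prod (μ.prod P)) := lintegral_mono hpt
        _ = (∫⁻ x, F x ∂(ν.prod (μ.prod P))) * (ENNReal.ofReal lam)⁻¹ :=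
            lintegral_mul_const' _ _ hinvne
        _ ≤ I * (1 + I)⁻¹ := by
            rw [hofReal]; exact mul_le_mul_left part1 _
        _ ≤ (1 + I) * (1 + I)⁻¹ := mul_le_mul_left le_add_self _
        _ = 1 := ENNReal.mul_inv_cancel (by simp) h1I
    calc luxemburgNorm N (ν.prod (μ.prod P)) f ≤ ENNReal.ofReal lam := by
          rw [luxemburgNorm]
          exact iInf_le_of_le lam (iInf_le_of_le hlam0 (iInf_le _ hcond))
      _ = 1 + I := hofReal
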